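/- For every s with 0 ≤ s ≤ n-1 and all j, m with 1 ≤ j, m ≤ p-1, the j-th convolution power of z_{p^s} satisfies z_{p^s}^j(t^{m p^s}) = m!·δ_{j,m} (equal to m! in K if j = m, and 0 otherwise). -/

import Mathlib

open Polynomial TensorProduct

noncomputable section

/-- The truncated polynomial algebra `K[t]/(t^{p^n})`, underlying the Hopf algebra
`H_{n,r,f}`. -/
abbrev TruncAlg (K : Type) [Field K] (p n : ℕ) : Type :=
  AdjoinRoot (X ^ p ^ n : K[X])

/-- `t`, the image of `X` in `K[t]/(t^{p^n})`. -/
def tgen (K : Type) [Field K] (p n : ℕ) : TruncAlg K p n :=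
  AdjoinRoot.root _

/-- The basis `1, t, t^2, …, t^{p^n-1}` of `K[t]/(t^{p^n})`. -/
def tbasis (K : Type) [Field K] (p n : ℕ) :
    Module.Basis (Fin (p ^ n)) K (TruncAlg K p n) :=
  (AdjoinRoot.powerBasis (f := (X ^ p ^ n : K[X]))
    (pow_ne_zero _ Polynomial.X_ne_zero)).basis.reindex
    (finCongr (by simp))

/-- The dual basis functional `z_j ∈ H = H_{n,r,f}^*`, with `z_j (t^i) = δ_{ij}`;
junk value `0` out of range. -/
def zdual (K : Type) [Field K] (p n : ℕ) (j : ℕ) :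
    Module.Dual K (TruncAlg K p n) :=
  if h : j < p ^ n then (tbasis K p n).coord ⟨j, h⟩ else 0

/-- The coefficient `1/(ℓ!(p-ℓ)!)`, computed in the prime field of `K`. -/
def pfCoeff (K : Type) [Field K] (p ℓ : ℕ) : K :=
  ((ℓ.factorial * (p - ℓ).factorial : ℕ) : K)⁻¹

/-- The element `Δ(t) = t⊗1 + 1⊗t + f Σ_{ℓ=1}^{p-1} (1/(ℓ!(p-ℓ)!)) t^{p^r ℓ} ⊗ t^{p^r (p-ℓ)}`. -/
def Delta_t (K : Type) [Field K] (p n r : ℕ) (f : K) :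
    TruncAlg K p n ⊗[K] TruncAlg K p n :=
  tgen K p n ⊗ₜ 1 + 1 ⊗ₜ tgen K p n +
    f • ∑ ℓ ∈ Finset.Icc 1 (p - 1),
      pfCoeff K p ℓ • ((tgen K p n ^ (p ^ r * ℓ)) ⊗ₜ[K] (tgen K p n ^ (p ^ r * (p - ℓ))))

/-- The comultiplication of `H_{n,r,f}` as a linear map, determined by `Δ(t^i) = Δ(t)^i`
(it is the unique `K`-algebra map with `t ↦ Δ(t)`). -/
def DeltaMap (K : Type) [Field K] (p n r : ℕ) (f : K) :
    TruncAlg K p n →ₗ[K] TruncAlg K p n ⊗[K] TruncAlg K p n :=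
  (tbasis K p n).constr K fun i => (Delta_t K p n r f) ^ (i : ℕ)

/-- Convolution product on `H = (H_{n,r,f})^*`:  `(z * z')(h) = mult ((z ⊗ z')(Δ h))`. -/
def conv (K : Type) [Field K] (p n r : ℕ) (f : K)
    (z z' : Module.Dual K (TruncAlg K p n)) : Module.Dual K (TruncAlg K p n) :=
  (LinearMap.mul' K K) ∘ₗ (TensorProduct.map z z') ∘ₗ DeltaMap K p n r f

/-- Convolution powers; the 0th power is the unit `z_0 = ε` of `H`. -/
def convPow (K : Type) [Field K] (p n r : ℕ) (f : K)
    (z : Module.Dual K (TruncAlg K p n)) : ℕ → Module.Dual K (TruncAlg K p n)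
  | 0 => zdual K p n 0
  | m + 1 => conv K p n r f (convPow K p n r f z m) z

/-- The convolution product `z_1^{j 0} · z_p^{j 1} ⋯ z_{p^{m-1}}^{j (m-1)}` in `H`. -/
def zprod (K : Type) [Field K] (p n r : ℕ) (f : K)
    (j : ℕ → ℕ) : ℕ → Module.Dual K (TruncAlg K p n)
  | 0 => zdual K p n 0
  | m + 1 => conv K p n r f (zprod K p n r f j m)
      (convPow K p n r f (zdual K p n (p ^ m)) (j m))



set_option linter.unusedSectionVars false
set_option maxHeartbeats 1000000

section aux
variable (p : ℕ) [Fact p.Prime] (K : Type) [Field K] [CharP K p] (n r s : ℕ) (f : K)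

lemma tbasis_apply (i : Fin (p ^ n)) : tbasis K p n i = tgen K p n ^ (i : ℕ) := by
  rw [tbasis, Module.Basis.reindex_apply, PowerBasis.basis_eq_pow, AdjoinRoot.powerBasis_gen]
  simp [tgen]

lemma tgen_pow_eq_zero {a : ℕ} (ha : p ^ n ≤ a) : tgen K p n ^ a = 0 := by
  have h0 : tgen K p n ^ p ^ n = 0 := by
    rw [tgen, ← AdjoinRoot.mk_X, ← map_pow, AdjoinRoot.mk_self]
  have : tgen K p n ^ a = tgen K p n ^ p ^ n * tgen K p n ^ (a - p ^ n) := by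
    rw [← pow_add]; congr 1; omega
  rw [this, h0, zero_mul]

lemma zdual_tpow {j : ℕ} (hj : j < p ^ n) (a : ℕ) :
    zdual K p n j (tgen K p n ^ a) = if a = j then 1 else 0 := by
  by_cases ha : a < p ^ n
  · rw [zdual, dif_pos hj, ← tbasis_apply p K n ⟨a, ha⟩, Module.Basis.coord_apply,
      Module.Basis.repr_self, Finsupp.single_apply]
    simp [Fin.ext_iff]
  · rw [tgen_pow_eq_zero p K n (le_of_not_gt ha), map_zero, if_neg (by omega)]

lemma ppow_lt (hs : s < n) : p ^ s < p ^ n :=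
  Nat.pow_lt_pow_right (Fact.out : p.Prime).one_lt hs

lemma trunc_nontrivial : Nontrivial (TruncAlg K p n) := by
  refine AdjoinRoot.nontrivial _ ?_
  rw [degree_X_pow]
  exact_mod_cast (pow_pos (Fact.out : p.Prime).pos n).ne'

lemma trunc_tensor_charP : CharP (TruncAlg K p n ⊗[K] TruncAlg K p n) p := by
  haveI := trunc_nontrivial p K n
  refine charP_of_injective_algebraMap (R := K) ?_ p
  intro a b h
  have h2 := congrArg (Algebra.TensorProduct.lmul' (S := TruncAlg K p n) K) h
  rw [AlgHom.commutes, AlgHom.commutes] at h2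
  exact (algebraMap K (TruncAlg K p n)).injective h2

/-- `z_{p^s}` kills anything divisible by `t^{p^r p^s}` when `0 < r`. -/
lemma zdual_highpow (hr : 0 < r) (hs : s < n) (w : TruncAlg K p n) :
    zdual K p n (p ^ s) (tgen K p n ^ (p ^ r * p ^ s) * w) = 0 := by
  have hE : p ^ s < p ^ r * p ^ s := by
    have h1 : 2 ≤ p ^ r := (Fact.out : p.Prime).two_le.trans
      (Nat.le_self_pow hr.ne' p)
    have : 0 < p ^ s := Nat.pow_pos (Fact.out : p.Prime).pos
    nlinarith
  set L : TruncAlg K p n →ₗ[K] K :=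
    (zdual K p n (p ^ s)) ∘ₗ (LinearMap.mulLeft K (tgen K p n ^ (p ^ r * p ^ s))) with hL
  have : L = 0 := by
    apply (tbasis K p n).ext
    intro i
    rw [hL, LinearMap.comp_apply, LinearMap.mulLeft_apply, tbasis_apply, ← pow_add,
      zdual_tpow p K n (ppow_lt p n s hs), LinearMap.zero_apply, if_neg (by omega)]
  simpa [hL] using LinearMap.congr_fun this w

lemma Phi_highpow (hr : 0 < r) (hs : s < n) (g : Module.Dual K (TruncAlg K p n))
    (x w : TruncAlg K p n) (X : TruncAlg K p n ⊗[K] TruncAlg K p n) :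
    (LinearMap.mul' K K ∘ₗ TensorProduct.map g (zdual K p n (p ^ s)))
      ((x ⊗ₜ[K] (tgen K p n ^ (p ^ r * p ^ s) * w)) * X) = 0 := by
  induction X using TensorProduct.induction_on with
  | zero => simp
  | tmul u v =>
    rw [Algebra.TensorProduct.tmul_mul_tmul, LinearMap.comp_apply, TensorProduct.map_tmul,
      LinearMap.mul'_apply, mul_assoc, zdual_highpow p K n r s hr hs, mul_zero]
  | add a b ha hb => rw [mul_add, map_add, ha, hb, add_zero]

lemma Phi_Cpow_mul (hr : 0 < r) (hs : s < n) (g : Module.Dual K (TruncAlg K p n))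
    (X : TruncAlg K p n ⊗[K] TruncAlg K p n) :
    (LinearMap.mul' K K ∘ₗ TensorProduct.map g (zdual K p n (p ^ s)))
      (((f • ∑ ℓ ∈ Finset.Icc 1 (p - 1), pfCoeff K p ℓ •
        ((tgen K p n ^ (p ^ r * ℓ)) ⊗ₜ[K] (tgen K p n ^ (p ^ r * (p - ℓ))))) ^ p ^ s) * X)
      = 0 := by
  haveI := trunc_tensor_charP p K n
  rw [_root_.smul_pow, sum_pow_char_pow, smul_mul_assoc, map_smul, Finset.sum_mul, map_sum,
    Finset.sum_eq_zero, smul_zero]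
  intro ℓ hℓ
  obtain ⟨h1, h2⟩ := Finset.mem_Icc.mp hℓ
  have hp2 : 2 ≤ p := (Fact.out : p.Prime).two_le
  rw [_root_.smul_pow, Algebra.TensorProduct.tmul_pow, smul_mul_assoc, map_smul]
  have hrpos : 0 < p ^ r := Nat.pow_pos (by omega)
  have hspos : 0 < p ^ s := Nat.pow_pos (by omega)
  have hle : p ^ r * p ^ s ≤ (p ^ r * (p - ℓ)) * p ^ s := by
    have h3 : p ^ r ≤ p ^ r * (p - ℓ) := Nat.le_mul_of_pos_right _ (by omega)
    exact Nat.mul_le_mul_right _ h3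
  have hsplit : (tgen K p n ^ (p ^ r * (p - ℓ))) ^ p ^ s
      = tgen K p n ^ (p ^ r * p ^ s) *
        tgen K p n ^ ((p ^ r * (p - ℓ)) * p ^ s - p ^ r * p ^ s) := by
    rw [← pow_mul, ← pow_add]
    congr 1
    omega
  rw [hsplit, Phi_highpow p K n r s hr hs g _ _ X, smul_zero]

lemma Delta_pow_q : Delta_t K p n r f ^ p ^ s
    = (tgen K p n ^ p ^ s) ⊗ₜ[K] (1 : TruncAlg K p n)
      + (1 : TruncAlg K p n) ⊗ₜ[K] (tgen K p n ^ p ^ s)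
      + (f • ∑ ℓ ∈ Finset.Icc 1 (p - 1), pfCoeff K p ℓ •
          ((tgen K p n ^ (p ^ r * ℓ)) ⊗ₜ[K] (tgen K p n ^ (p ^ r * (p - ℓ))))) ^ p ^ s := by
  haveI := trunc_tensor_charP p K n
  rw [Delta_t, add_pow_char_pow, add_pow_char_pow, Algebra.TensorProduct.tmul_pow,
    Algebra.TensorProduct.tmul_pow, one_pow]

lemma main_aux (hr : 0 < r) (hs : s < n) :
    ∀ j m : ℕ, m ≤ p - 1 →
      convPow K p n r f (zdual K p n (p ^ s)) j (tgen K p n ^ (m * p ^ s))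
        = if j = m then (m.factorial : K) else 0 := by
  have hp2 : 2 ≤ p := (Fact.out : p.Prime).two_le
  have hps : p ^ s < p ^ n := ppow_lt p n s hs
  have hspos : 0 < p ^ s := Nat.pow_pos (by omega)
  have hnpos : 0 < p ^ n := Nat.pow_pos (by omega)
  have hlt : ∀ m : ℕ, m ≤ p - 1 → m * p ^ s < p ^ n := by
    intro m hm
    have h1 : m * p ^ s < p * p ^ s := (Nat.mul_lt_mul_right hspos).mpr (by omega)
    have h2 : p * p ^ s = p ^ (s + 1) := (pow_succ' p s).symm
    have h3 : p ^ (s + 1) ≤ p ^ n := Nat.pow_le_pow_right (by omega) (by omega)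
    omega
  intro j
  induction j with
  | zero =>
    intro m hm
    show zdual K p n 0 _ = _
    rw [zdual_tpow p K n hnpos]
    rcases Nat.eq_zero_or_pos m with h0 | h0
    · subst h0; simp
    · rw [if_neg (by have := Nat.mul_pos h0 hspos; omega), if_neg (by omega)]
  | succ j ih =>
    intro m hm
    show conv K p n r f (convPow K p n r f (zdual K p n (p ^ s)) j) (zdual K p n (p ^ s)) _ = _
    set g := convPow K p n r f (zdual K p n (p ^ s)) j with hg
    simp only [conv, LinearMap.comp_apply]
    have hDM : DeltaMap K p n r f (tgen K p n ^ (m * p ^ s))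
        = Delta_t K p n r f ^ (m * p ^ s) := by
      rw [← tbasis_apply p K n ⟨m * p ^ s, hlt m hm⟩, DeltaMap, Module.Basis.constr_basis]
    rw [hDM]
    rcases Nat.eq_zero_or_pos m with h0 | h0
    · subst h0
      simp only [zero_mul, pow_zero]
      rw [Algebra.TensorProduct.one_def, TensorProduct.map_tmul, LinearMap.mul'_apply]
      have hz1 : zdual K p n (p ^ s) (1 : TruncAlg K p n) = 0 := by
        rw [← pow_zero (tgen K p n), zdual_tpow p K n hps, if_neg (by omega)]
      rw [hz1, mul_zero, if_neg (by omega)]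
    · rw [pow_mul', Delta_pow_q]
      set A := (tgen K p n ^ p ^ s) ⊗ₜ[K] (1 : TruncAlg K p n) with hA
      set B := (1 : TruncAlg K p n) ⊗ₜ[K] (tgen K p n ^ p ^ s) with hB
      set C := (f • ∑ ℓ ∈ Finset.Icc 1 (p - 1), pfCoeff K p ℓ •
          ((tgen K p n ^ (p ^ r * ℓ)) ⊗ₜ[K] (tgen K p n ^ (p ^ r * (p - ℓ))))) ^ p ^ s with hC
      rw [add_comm (A + B) C, add_pow, map_sum, map_sum, Finset.sum_range_succ']
      have hzero : ∀ i, LinearMap.mul' K K (TensorProduct.map g (zdual K p n (p ^ s))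
          (C ^ (i + 1) * (A + B) ^ (m - (i + 1)) * ((m.choose (i + 1) : ℕ) :
            TruncAlg K p n ⊗[K] TruncAlg K p n))) = 0 := by
        intro i
        rw [pow_succ' C, mul_assoc, mul_assoc, hC]
        exact Phi_Cpow_mul p K n r s f hr hs g _
      rw [Finset.sum_eq_zero fun i _ => hzero i, zero_add]
      simp only [pow_zero, one_mul, Nat.choose_zero_right, Nat.cast_one, mul_one, Nat.sub_zero]
      rw [add_pow, map_sum, map_sum]
      have hterm : ∀ i, A ^ i * B ^ (m - i) * ((m.choose i : ℕ) :
            TruncAlg K p n ⊗[K] TruncAlg K p n)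
          = (m.choose i) • ((tgen K p n ^ (i * p ^ s)) ⊗ₜ[K]
              (tgen K p n ^ ((m - i) * p ^ s))) := by
        intro i
        rw [hA, hB, Algebra.TensorProduct.tmul_pow, Algebra.TensorProduct.tmul_pow,
          one_pow, one_pow, Algebra.TensorProduct.tmul_mul_tmul, mul_one, one_mul,
          ← pow_mul, ← pow_mul, mul_comm (p ^ s) i, mul_comm (p ^ s) (m - i),
          mul_comm _ ((m.choose i : ℕ) : TruncAlg K p n ⊗[K] TruncAlg K p n), ← nsmul_eq_mul]
      simp only [hterm, map_nsmul, TensorProduct.map_tmul, LinearMap.mul'_apply,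
        zdual_tpow p K n hps]
      rw [Finset.sum_eq_single (m - 1)]
      · rw [show (m - (m - 1)) * p ^ s = p ^ s from by
            rw [show m - (m - 1) = 1 from by omega, one_mul], if_pos rfl, mul_one,
          ih (m - 1) (by omega)]
        have hch : m.choose (m - 1) = m := by
          rw [← Nat.choose_symm (Nat.sub_le m 1), show m - (m - 1) = 1 from by omega,
            Nat.choose_one_right]
        rw [hch]
        by_cases hj : j = m - 1
        · rw [if_pos hj, if_pos (by omega), nsmul_eq_mul, ← Nat.cast_mul,
            Nat.mul_factorial_pred h0.ne']
        · rw [if_neg hj, if_neg (by omega), smul_zero]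
      · intro i hi hne
        rw [if_neg, mul_zero, smul_zero]
        have hi' : i < m + 1 := Finset.mem_range.mp hi
        intro hcon
        have : m - i = 1 := by
          have h1 : (m - i) * p ^ s = 1 * p ^ s := by rw [one_mul]; exact hcon
          have := Nat.eq_of_mul_eq_mul_right hspos h1
          omega
        omega
      · intro h
        exact absurd (Finset.mem_range.mpr (by omega)) h

end aux


/-- In `H = H_{n,r,f}^*`, for `0 ≤ s ≤ n-1` and `1 ≤ j, m ≤ p-1`,
the convolution power `z_{p^s}^j` satisfies `z_{p^s}^j(t^{m p^s}) = m!·δ_{j,m}`. -/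
theorem convPow_zdual_apply_tpow
    (p : ℕ) [Fact p.Prime] (F : Type) [Field F] [Fintype F] [CharP F p]
    (n r : ℕ) (hr : 0 < r) (hrn : r < n) (hn2r : n ≤ 2 * r)
    (f : LaurentSeries F) (hf : f ≠ 0) :
    ∀ s : ℕ, s < n → ∀ j m : ℕ, 1 ≤ j → j ≤ p - 1 → 1 ≤ m → m ≤ p - 1 →
      convPow (LaurentSeries F) p n r f (zdual (LaurentSeries F) p n (p ^ s)) j
          (tgen (LaurentSeries F) p n ^ (m * p ^ s))
        = if j = m then (m.factorial : LaurentSeries F) else 0 := by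
  haveI : CharP (LaurentSeries F) p :=
    charP_of_injective_algebraMap (algebraMap F (LaurentSeries F)).injective p
  intro s hs j m _ _ _ hm2
  exact main_aux p (LaurentSeries F) n r s f hr hs j m hm2

end
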